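/- arXiv:2401.15226 — 3 statements merged into one kernel-verified Lean document; each statement's English description precedes it below -/
import Mathlib

section
/- Let λ > 0 and γ ∈ ℝ. For f : (0,∞) → ℝ with ∫₀^∞ |f(r)|²(1+r²)^γ r dr < ∞ and satisfying the solvability condition ∫₀^∞ f(r) e^{-λ r} r dr = 0, the function u(r) = (1/r)∫₀^r e^{-λ(s-r)} f(s) s ds satisfies the bound ∫₀^1 |u(r)|²(1+r²)^γ r dr ≤ C ∫₀^1 |f(r)|²(1+r²)^γ r dr for a constant C depending only on λ and γ. -/
open MeasureTheory Set Filter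

private lemma cs_aux {μ : Measure ℝ} {a b : ℝ → ℝ} (ha : AEStronglyMeasurable a μ)
    (hb : AEStronglyMeasurable b μ) (ha2 : Integrable (fun x => a x ^ 2) μ)
    (hb2 : Integrable (fun x => b x ^ 2) μ) :
    (∫ x, a x * b x ∂μ) ^ 2 ≤ (∫ x, a x ^ 2 ∂μ) * (∫ x, b x ^ 2 ∂μ) := by
  have hpq : Real.HolderConjugate 2 2 := ⟨by norm_num, by norm_num, by norm_num⟩
  have habs : ∀ g : ℝ → ℝ, Integrable (fun x => g x ^ 2) μ → AEStronglyMeasurable g μ →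
      MemLp (fun x => |g x|) (ENNReal.ofReal 2) μ := by
    intro g hg2 hg
    rw [show ENNReal.ofReal 2 = 2 by norm_num]
    refine (memLp_two_iff_integrable_sq hg.norm).mpr ?_
    simpa [sq_abs] using hg2
  have h := integral_mul_le_Lp_mul_Lq_of_nonneg hpq
      (Filter.Eventually.of_forall fun x => abs_nonneg (a x))
      (Filter.Eventually.of_forall fun x => abs_nonneg (b x))
      (habs a ha2 ha) (habs b hb2 hb)
  have hI1 : |∫ x, a x * b x ∂μ| ≤ ∫ x, |a x| * |b x| ∂μ := by
    calc |∫ x, a x * b x ∂μ| ≤ ∫ x, ‖a x * b x‖ ∂μ := by simpa [Real.norm_eq_abs] using norm_integral_le_integral_norm (μ := μ) (fun x => a x * b x)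
    _ = ∫ x, |a x| * |b x| ∂μ := by simp [Real.norm_eq_abs, abs_mul]
  have hA : ∫ x, |a x| ^ (2:ℝ) ∂μ = ∫ x, a x ^ 2 ∂μ := by
    refine integral_congr_ae (Filter.Eventually.of_forall fun x => ?_)
    have : |a x| ^ (2:ℝ) = |a x| ^ (2:ℕ) := by
      rw [← Real.rpow_natCast]; norm_num
    simp [this, sq_abs]
  have hB : ∫ x, |b x| ^ (2:ℝ) ∂μ = ∫ x, b x ^ 2 ∂μ := by
    refine integral_congr_ae (Filter.Eventually.of_forall fun x => ?_)
    have : |b x| ^ (2:ℝ) = |b x| ^ (2:ℕ) := by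
      rw [← Real.rpow_natCast]; norm_num
    simp [this, sq_abs]
  rw [hA, hB] at h
  have hA0 : 0 ≤ ∫ x, a x ^ 2 ∂μ := integral_nonneg fun x => sq_nonneg _
  have hB0 : 0 ≤ ∫ x, b x ^ 2 ∂μ := integral_nonneg fun x => sq_nonneg _
  calc (∫ x, a x * b x ∂μ) ^ 2 = |∫ x, a x * b x ∂μ| ^ 2 := (sq_abs _).symm
    _ ≤ (∫ x, |a x| * |b x| ∂μ) ^ 2 := by
        exact pow_le_pow_left₀ (abs_nonneg _) hI1 2
    _ ≤ ((∫ x, a x ^ 2 ∂μ) ^ (1/(2:ℝ)) * (∫ x, b x ^ 2 ∂μ) ^ (1/(2:ℝ))) ^ 2 := by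
        refine pow_le_pow_left₀ (integral_nonneg fun x => mul_nonneg (abs_nonneg _) (abs_nonneg _)) h 2
    _ = (∫ x, a x ^ 2 ∂μ) * (∫ x, b x ^ 2 ∂μ) := by
        rw [mul_pow, ← Real.rpow_natCast (_ ^ (1/(2:ℝ))) 2, ← Real.rpow_natCast (_ ^ (1/(2:ℝ))) 2,
          ← Real.rpow_mul hA0, ← Real.rpow_mul hB0]
        norm_num


/-- near-origin bound for the inverse of `L u = u' + u/r - λu` on the range
characterized by orthogonality to `e^{-λ r}`: with
`u(r) = (1/r)∫₀^r e^{-λ(s-r)} f(s) s ds`, we have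
`∫₀^1 u² (1+r²)^γ r dr ≤ C ∫₀^1 f² (1+r²)^γ r dr` with `C = C(λ,γ)`. -/
theorem stmt3 (lam γ : ℝ) (hlam : 0 < lam) :
    ∃ C : ℝ, 0 < C ∧
      ∀ f : ℝ → ℝ, Measurable f →
        IntegrableOn (fun r => (f r) ^ 2 * (1 + r ^ 2) ^ γ * r) (Ioi 0) →
        IntegrableOn (fun r => f r * Real.exp (-lam * r) * r) (Ioi 0) →
        (∫ r in Ioi (0:ℝ), f r * Real.exp (-lam * r) * r) = 0 →
        (∫ r in Ioo (0:ℝ) 1,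
            ((1 / r) * ∫ s in Ioo (0:ℝ) r, Real.exp (-lam * (s - r)) * f s * s) ^ 2
              * (1 + r ^ 2) ^ γ * r)
          ≤ C * ∫ r in Ioo (0:ℝ) 1, (f r) ^ 2 * (1 + r ^ 2) ^ γ * r := by
  have h2γ : (0:ℝ) < (2:ℝ) ^ γ := Real.rpow_pos_of_pos two_pos γ
  set m := min 1 ((2:ℝ) ^ γ) with hmdef
  set M := max 1 ((2:ℝ) ^ γ) with hMdef
  have hm0 : 0 < m := lt_min one_pos h2γ
  have hM0 : (0:ℝ) < M := lt_of_lt_of_le one_pos (le_max_left _ _)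
  -- weight bounds on [0,1]
  have hwlb : ∀ r : ℝ, 0 ≤ r → r ≤ 1 → m ≤ (1 + r ^ 2) ^ γ := by
    intro r h0 h1
    have hb1 : (1:ℝ) ≤ 1 + r ^ 2 := by nlinarith
    have hb2 : 1 + r ^ 2 ≤ 2 := by nlinarith
    rcases le_or_gt 0 γ with hγ | hγ
    · have : (1:ℝ) ^ γ ≤ (1 + r ^ 2) ^ γ := Real.rpow_le_rpow (by norm_num) hb1 hγ
      rw [Real.one_rpow] at this
      exact le_trans (min_le_left _ _) this
    · have : (2:ℝ) ^ γ ≤ (1 + r ^ 2) ^ γ :=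
        Real.rpow_le_rpow_of_nonpos (by linarith) hb2 hγ.le
      exact le_trans (min_le_right _ _) this
  have hwub : ∀ r : ℝ, 0 ≤ r → r ≤ 1 → (1 + r ^ 2) ^ γ ≤ M := by
    intro r h0 h1
    have hb1 : (1:ℝ) ≤ 1 + r ^ 2 := by nlinarith
    have hb2 : 1 + r ^ 2 ≤ 2 := by nlinarith
    rcases le_or_gt 0 γ with hγ | hγ
    · have : (1 + r ^ 2) ^ γ ≤ (2:ℝ) ^ γ := Real.rpow_le_rpow (by linarith) hb2 hγ
      exact le_trans this (le_max_right _ _)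
    · have : (1 + r ^ 2) ^ γ ≤ (1:ℝ) ^ γ :=
        Real.rpow_le_rpow_of_nonpos (by norm_num) hb1 hγ.le
      rw [Real.one_rpow] at this
      exact le_trans this (le_max_left _ _)
  refine ⟨Real.exp (2 * lam) * M / m, by positivity, ?_⟩
  intro f hf hint _ _
  -- integrability of f^2 * s on (0,1)
  have h1int : IntegrableOn (fun s => f s ^ 2 * (1 + s ^ 2) ^ γ * s) (Set.Ioo 0 1) :=
    hint.mono_set (fun x hx => hx.1)
  have hb2 : IntegrableOn (fun s => f s ^ 2 * s) (Set.Ioo 0 1) := by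
    refine Integrable.mono' (h1int.const_mul m⁻¹) ?_ ?_
    · exact ((hf.pow_const 2).mul measurable_id).aestronglyMeasurable
    · rw [ae_restrict_iff' measurableSet_Ioo]
      refine Filter.Eventually.of_forall fun s hs => ?_
      rw [Real.norm_of_nonneg (mul_nonneg (sq_nonneg _) hs.1.le)]
      have hw := hwlb s hs.1.le hs.2.le
      rw [le_inv_mul_iff₀ hm0]
      nlinarith [sq_nonneg (f s), hs.1.le, mul_le_mul_of_nonneg_left hw
        (mul_nonneg (sq_nonneg (f s)) hs.1.le)]
  set I := ∫ s in Set.Ioo (0:ℝ) 1, f s ^ 2 * s with hIdef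
  have hI0 : 0 ≤ I :=
    setIntegral_nonneg measurableSet_Ioo fun s hs => mul_nonneg (sq_nonneg _) hs.1.le
  have hIle : I ≤ m⁻¹ * ∫ s in Set.Ioo (0:ℝ) 1, f s ^ 2 * (1 + s ^ 2) ^ γ * s := by
    rw [← integral_const_mul]
    refine integral_mono_ae hb2 (h1int.const_mul m⁻¹) ?_
    refine (ae_restrict_iff' measurableSet_Ioo).mpr
      (Filter.Eventually.of_forall fun s hs => ?_)
    have hw := hwlb s hs.1.le hs.2.le
    beta_reduce
    rw [le_inv_mul_iff₀ hm0]
    nlinarith [sq_nonneg (f s), hs.1.le, mul_le_mul_of_nonneg_left hw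
      (mul_nonneg (sq_nonneg (f s)) hs.1.le)]
  -- pointwise bound
  have key : ∀ r ∈ Set.Ioo (0:ℝ) 1,
      ((1 / r) * ∫ s in Set.Ioo (0:ℝ) r, Real.exp (-lam * (s - r)) * f s * s) ^ 2
        * (1 + r ^ 2) ^ γ * r ≤ Real.exp (2 * lam) * M * I := by
    intro r hr
    have hr0 : 0 < r := hr.1
    have hr1 : r < 1 := hr.2
    set a : ℝ → ℝ := fun s => Real.exp (-lam * (s - r)) * Real.sqrt s with hadef
    set b : ℝ → ℝ := fun s => f s * Real.sqrt s with hbdef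
    have hJeq : (∫ s in Set.Ioo (0:ℝ) r, Real.exp (-lam * (s - r)) * f s * s)
        = ∫ s in Set.Ioo (0:ℝ) r, a s * b s := by
      refine setIntegral_congr_fun measurableSet_Ioo fun s hs => ?_
      simp only [hadef, hbdef]
      rw [show Real.exp (-lam * (s - r)) * Real.sqrt s * (f s * Real.sqrt s)
          = Real.exp (-lam * (s - r)) * f s * (Real.sqrt s * Real.sqrt s) from by ring,
        Real.mul_self_sqrt hs.1.le]
    have hconta : Continuous a := by
      exact (Real.continuous_exp.comp (by continuity)).mul Real.continuous_sqrt
    have ha2 : IntegrableOn (fun s => a s ^ 2) (Set.Ioo 0 r) :=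
      ((hconta.pow 2).integrableOn_Icc (a := 0) (b := r)).mono_set Set.Ioo_subset_Icc_self
    have hsub : Set.Ioo (0:ℝ) r ⊆ Set.Ioo 0 1 := Set.Ioo_subset_Ioo le_rfl hr1.le
    have hb2r : IntegrableOn (fun s => b s ^ 2) (Set.Ioo 0 r) := by
      refine ((hb2.mono_set hsub).congr ?_)
      refine (ae_restrict_iff' measurableSet_Ioo).mpr
        (Filter.Eventually.of_forall fun s hs => ?_)
      simp only [hbdef]
      rw [mul_pow, Real.sq_sqrt hs.1.le]
    have hma : AEStronglyMeasurable a (volume.restrict (Set.Ioo 0 r)) :=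
      hconta.aestronglyMeasurable
    have hmb : AEStronglyMeasurable b (volume.restrict (Set.Ioo 0 r)) :=
      (hf.mul Real.continuous_sqrt.measurable).aestronglyMeasurable
    have hCS := cs_aux hma hmb ha2 hb2r
    have hA : (∫ s in Set.Ioo (0:ℝ) r, a s ^ 2) ≤ Real.exp (2 * lam) * r := by
      have h1 : (∫ s in Set.Ioo (0:ℝ) r, a s ^ 2)
          ≤ ∫ _s in Set.Ioo (0:ℝ) r, Real.exp (2 * lam) := by
        refine integral_mono_ae ha2 ((integrableOn_const_iff).mpr (Or.inr (by
          rw [Real.volume_Ioo]; exact ENNReal.ofReal_lt_top))) ?_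
        refine (ae_restrict_iff' measurableSet_Ioo).mpr
          (Filter.Eventually.of_forall fun s hs => ?_)
        simp only [hadef]
        rw [mul_pow, Real.sq_sqrt hs.1.le, ← Real.exp_nat_mul]
        have he : Real.exp (↑(2:ℕ) * (-lam * (s - r))) ≤ Real.exp (2 * lam) := by
          apply Real.exp_le_exp.mpr
          push_cast
          nlinarith [hs.1, hs.2, hlam]
        have hs1 : s ≤ 1 := le_trans hs.2.le hr1.le
        nlinarith [Real.exp_pos (↑(2:ℕ) * (-lam * (s - r))), hs.1.le]
      rw [setIntegral_const, Real.volume_real_Ioo_of_le (by linarith), smul_eq_mul] at h1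
      linarith [h1]
    have hB : (∫ s in Set.Ioo (0:ℝ) r, b s ^ 2) ≤ I := by
      have heq : (∫ s in Set.Ioo (0:ℝ) r, b s ^ 2)
          = ∫ s in Set.Ioo (0:ℝ) r, f s ^ 2 * s := by
        refine setIntegral_congr_fun measurableSet_Ioo fun s hs => ?_
        simp only [hbdef]
        rw [mul_pow, Real.sq_sqrt hs.1.le]
      rw [heq, hIdef]
      refine setIntegral_mono_set hb2 ?_ (HasSubset.Subset.eventuallyLE hsub)
      exact (ae_restrict_iff' measurableSet_Ioo).mpr
        (Filter.Eventually.of_forall fun s hs => mul_nonneg (sq_nonneg _) hs.1.le)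
    have hB0 : 0 ≤ ∫ s in Set.Ioo (0:ℝ) r, b s ^ 2 :=
      setIntegral_nonneg measurableSet_Ioo fun s _ => sq_nonneg _
    have hJ2 : (∫ s in Set.Ioo (0:ℝ) r, Real.exp (-lam * (s - r)) * f s * s) ^ 2
        ≤ Real.exp (2 * lam) * r * I := by
      rw [hJeq]
      calc (∫ s in Set.Ioo (0:ℝ) r, a s * b s) ^ 2
          ≤ (∫ s in Set.Ioo (0:ℝ) r, a s ^ 2) * ∫ s in Set.Ioo (0:ℝ) r, b s ^ 2 := hCS
        _ ≤ (Real.exp (2 * lam) * r) * I := by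
            refine mul_le_mul hA hB hB0 (by positivity)
    have hwM : (1 + r ^ 2) ^ γ ≤ M := hwub r hr0.le hr1.le
    have hw0 : 0 ≤ (1 + r ^ 2) ^ γ := Real.rpow_nonneg (by positivity) γ
    set J := ∫ s in Set.Ioo (0:ℝ) r, Real.exp (-lam * (s - r)) * f s * s with hJdef
    calc ((1 / r) * J) ^ 2 * (1 + r ^ 2) ^ γ * r
        = (J ^ 2 * (1 + r ^ 2) ^ γ) / r := by
          field_simp
      _ ≤ ((Real.exp (2 * lam) * r * I) * M) / r := by
          gcongr
      _ = Real.exp (2 * lam) * M * I := by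
          field_simp
  calc (∫ r in Set.Ioo (0:ℝ) 1,
          ((1 / r) * ∫ s in Set.Ioo (0:ℝ) r, Real.exp (-lam * (s - r)) * f s * s) ^ 2
            * (1 + r ^ 2) ^ γ * r)
      ≤ ∫ _r in Set.Ioo (0:ℝ) 1, Real.exp (2 * lam) * M * I := by
        refine integral_mono_of_nonneg ?_ ((integrableOn_const_iff).mpr (Or.inr (by
          rw [Real.volume_Ioo]; exact ENNReal.ofReal_lt_top))) ?_
        · exact (ae_restrict_iff' measurableSet_Ioo).mpr
            (Filter.Eventually.of_forall fun r hr => mul_nonneg (mul_nonneg (sq_nonneg _)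
              (Real.rpow_nonneg (by positivity) γ)) hr.1.le)
        · exact (ae_restrict_iff' measurableSet_Ioo).mpr
            (Filter.Eventually.of_forall fun r hr => key r hr)
    _ = Real.exp (2 * lam) * M * I := by
        rw [setIntegral_const, Real.volume_real_Ioo_of_le (by norm_num), smul_eq_mul]
        norm_num
    _ ≤ Real.exp (2 * lam) * M * (m⁻¹ * ∫ s in Set.Ioo (0:ℝ) 1, f s ^ 2 * (1 + s ^ 2) ^ γ * s) :=
        mul_le_mul_of_nonneg_left hIle (by positivity)
    _ = Real.exp (2 * lam) * M / m * ∫ r in Set.Ioo (0:ℝ) 1, f r ^ 2 * (1 + r ^ 2) ^ γ * r := by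
        ring
end

section
/- Let λ > 0 and γ ∈ ℝ. Define for f ∈ L²((1,∞), (1+r²)^γ r dr) the function u(r) = (1/r)∫_∞^r e^{-λ(s-r)} f(s) s ds = -(1/r)∫_r^∞ e^{-λ(s-r)} f(s) s ds. Then there is a constant C₁ = C₁(λ,γ) such that (∫₁^∞ |u(r)|² (1+r²)^γ r dr)^{1/2} ≤ C₁ (∫₁^∞ |f(r)|² (1+r²)^γ r dr)^{1/2}. -/
open MeasureTheory Set Filter Real
open scoped ENNReal

private lemma peetre (a b : ℝ) : 1 + (a+b)^2 ≤ 2*(1+a^2)*(1+b^2) := by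
  nlinarith [sq_nonneg (a-b), sq_nonneg (a*b)]

private lemma ratio_bound (γ : ℝ) {r z : ℝ} (hr : 1 ≤ r) (hz : 0 ≤ z) :
    (r+z) * (1+(r+z)^2) ^ (-γ) ≤ (r * (1+r^2) ^ (-γ)) * ((1+z) * (2*(1+z^2)) ^ |γ|) := by
  have hr0 : (0:ℝ) < r := lt_of_lt_of_le one_pos hr
  have ha : (0:ℝ) < 1 + r^2 := by positivity
  have hb : (0:ℝ) < 1 + (r+z)^2 := by positivity
  have hc : (0:ℝ) < 2*(1+z^2) := by positivity
  have h1 : r + z ≤ r * (1+z) := by nlinarith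
  have hab : 1 + r^2 ≤ 1 + (r+z)^2 := by nlinarith
  have hbac : 1 + (r+z)^2 ≤ (1+r^2) * (2*(1+z^2)) := by nlinarith [peetre r z]
  -- second factor bound
  have key : (1+(r+z)^2) ^ (-γ) ≤ (1+r^2) ^ (-γ) * (2*(1+z^2)) ^ |γ| := by
    have ht1 : (1:ℝ) ≤ (1+(r+z)^2) / (1+r^2) := (one_le_div ha).mpr hab
    have ht2 : (1+(r+z)^2) / (1+r^2) ≤ 2*(1+z^2) := (div_le_iff₀ ha).mpr (by linarith [hbac])
    have h3 : ((1+(r+z)^2) / (1+r^2)) ^ (-γ) ≤ (2*(1+z^2)) ^ |γ| := by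
      calc ((1+(r+z)^2) / (1+r^2)) ^ (-γ)
          ≤ ((1+(r+z)^2) / (1+r^2)) ^ |γ| :=
            Real.rpow_le_rpow_of_exponent_le ht1 (neg_le_abs γ)
        _ ≤ (2*(1+z^2)) ^ |γ| :=
            Real.rpow_le_rpow (by linarith) ht2 (abs_nonneg γ)
    have hsplit : ((1+(r+z)^2) / (1+r^2)) ^ (-γ) = (1+(r+z)^2) ^ (-γ) / (1+r^2) ^ (-γ) :=
      Real.div_rpow hb.le ha.le (-γ)
    rw [hsplit] at h3
    have hpow : (0:ℝ) < (1+r^2) ^ (-γ) := Real.rpow_pos_of_pos ha _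
    calc (1+(r+z)^2) ^ (-γ)
        = ((1+(r+z)^2) ^ (-γ) / (1+r^2) ^ (-γ)) * (1+r^2) ^ (-γ) := by
          field_simp
      _ ≤ (2*(1+z^2)) ^ |γ| * (1+r^2) ^ (-γ) :=
          mul_le_mul_of_nonneg_right h3 hpow.le
      _ = (1+r^2) ^ (-γ) * (2*(1+z^2)) ^ |γ| := mul_comm _ _
  calc (r+z) * (1+(r+z)^2) ^ (-γ)
      ≤ (r*(1+z)) * ((1+r^2) ^ (-γ) * (2*(1+z^2)) ^ |γ|) := by
        apply mul_le_mul h1 key (Real.rpow_nonneg hb.le _)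
        positivity
    _ = (r * (1+r^2) ^ (-γ)) * ((1+z) * (2*(1+z^2)) ^ |γ|) := by ring

private lemma translate_Ioi (r : ℝ) (h : ℝ → ℝ≥0∞) (hh : Measurable h) :
    ∫⁻ s in Ioi r, h (s - r) = ∫⁻ z in Ioi 0, h z := by
  have hmp : MeasurePreserving (· + r) (volume : Measure ℝ) volume :=
    measurePreserving_add_right volume r
  have : ∫⁻ s in Ioi r, h (s - r) ∂(volume : Measure ℝ)
      = ∫⁻ s in Ioi r, h (s - r) ∂(Measure.map (· + r) volume) := by rw [hmp.map_eq]
  have hm : Measurable fun s : ℝ => h (s - r) := hh.comp (measurable_id.sub_const r)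
  have hg : Measurable fun x : ℝ => x + r := measurable_add_const r
  rw [this, setLIntegral_map measurableSet_Ioi hm hg]
  have hpre : (· + r) ⁻¹' Ioi r = Ioi 0 := by
    ext x; simp [lt_add_iff_pos_left]
  simp only [add_sub_cancel_right, hpre]

private lemma reflect_Iio (s : ℝ) (h : ℝ → ℝ≥0∞) (hh : Measurable h) :
    ∫⁻ r in Iio s, h (s - r) = ∫⁻ z in Ioi 0, h z := by
  have hmp : MeasurePreserving (fun x : ℝ => s - x) (volume : Measure ℝ) volume := by
    have h1 : MeasurePreserving (fun x : ℝ => -x) (volume : Measure ℝ) volume :=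
      Measure.measurePreserving_neg _
    have h2 : MeasurePreserving (· + s) (volume : Measure ℝ) volume :=
      measurePreserving_add_right volume s
    have : (fun x : ℝ => s - x) = (· + s) ∘ (fun x : ℝ => -x) := by
      funext x; simp [sub_eq_neg_add]
    rw [this]
    exact h2.comp h1
  have : ∫⁻ r in Iio s, h (s - r) ∂(volume : Measure ℝ)
      = ∫⁻ r in Iio s, h (s - r) ∂(Measure.map (fun x : ℝ => s - x) volume) := by
    rw [hmp.map_eq]
  have hm : Measurable fun r : ℝ => h (s - r) := hh.comp (measurable_const.sub measurable_id)
  have hg : Measurable fun x : ℝ => s - x := measurable_const.sub measurable_id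
  rw [this, setLIntegral_map measurableSet_Iio hm hg]
  have hpre : (fun x : ℝ => s - x) ⁻¹' Iio s = Ioi 0 := by
    ext x; simp
  have : ∀ x : ℝ, s - (s - x) = x := fun x => by ring
  simp only [this, hpre]

private lemma g_integrable (lam γ : ℝ) (hlam : 0 < lam) :
    IntegrableOn (fun z => Real.exp (-lam*z) * ((1+z) * (2*(1+z^2)) ^ |γ|)) (Ioi 0) := by
  apply integrable_of_isBigO_exp_neg (half_pos hlam) (a := 0)
  · apply Continuous.continuousOn
    apply (Real.continuous_exp.comp (continuous_const.mul continuous_id)).mul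
    apply (continuous_const.add continuous_id).mul
    exact Continuous.rpow_const (by continuity) (fun x => Or.inl (by positivity))
  · have hφ : (fun z : ℝ => (1+z) * (2*(1+z^2)) ^ |γ|) =O[atTop]
        (fun z : ℝ => z ^ (1 + 2*|γ|)) := by
      apply Asymptotics.IsBigO.of_bound (2 * 4 ^ |γ|)
      filter_upwards [eventually_ge_atTop (1:ℝ)] with z hz
      have hz0 : (0:ℝ) < z := lt_of_lt_of_le one_pos hz
      have h1 : (1+z) ≤ 2*z := by linarith
      have h2 : (2*(1+z^2)) ^ |γ| ≤ 4 ^ |γ| * z ^ (2*|γ|) := by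
        have : (2*(1+z^2)) ≤ 4 * z^2 := by nlinarith
        calc (2*(1+z^2)) ^ |γ| ≤ (4*z^2) ^ |γ| :=
              Real.rpow_le_rpow (by positivity) this (abs_nonneg γ)
          _ = 4 ^ |γ| * (z^2) ^ |γ| := Real.mul_rpow (by norm_num) (by positivity)
          _ = 4 ^ |γ| * z ^ (2*|γ|) := by
              rw [← Real.rpow_natCast z 2, ← Real.rpow_mul hz0.le]
              norm_num
      have hnn : (0:ℝ) ≤ (1+z) * (2*(1+z^2)) ^ |γ| := by positivity
      rw [Real.norm_of_nonneg hnn, Real.norm_of_nonneg (by positivity)]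
      calc (1+z) * (2*(1+z^2)) ^ |γ| ≤ (2*z) * (4 ^ |γ| * z ^ (2*|γ|)) := by
            apply mul_le_mul h1 h2 (by positivity) (by positivity)
        _ = (2 * 4 ^ |γ|) * (z * z ^ (2*|γ|)) := by ring
        _ = (2 * 4 ^ |γ|) * z ^ (1 + 2*|γ|) := by
            rw [Real.rpow_add hz0, Real.rpow_one]
    have h2 := hφ.trans (isLittleO_rpow_exp_pos_mul_atTop (1 + 2*|γ|) (half_pos hlam)).isBigO
    have h3 := (Asymptotics.isBigO_refl (fun z : ℝ => Real.exp (-lam*z)) atTop).mul h2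
    have heq : (fun z : ℝ => Real.exp (-lam*z) * Real.exp (lam/2*z))
        = (fun z : ℝ => Real.exp (-(lam/2)*z)) := by
      funext z; rw [← Real.exp_add]; ring_nf
    rw [← heq]; exact h3
/-- far-field bound: with `u(r) = -(1/r)∫_r^∞ e^{-λ(s-r)} f(s) s ds`,
`(∫₁^∞ u² (1+r²)^γ r dr)^{1/2} ≤ C₁ (∫₁^∞ f² (1+r²)^γ r dr)^{1/2}` with `C₁ = C₁(λ,γ)`. -/
theorem stmt4 (lam γ : ℝ) (hlam : 0 < lam) :
    ∃ C₁ : ℝ, 0 < C₁ ∧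
      ∀ f : ℝ → ℝ, Measurable f →
        IntegrableOn (fun r => (f r) ^ 2 * (1 + r ^ 2) ^ γ * r) (Ioi 1) →
        Real.sqrt (∫ r in Ioi (1:ℝ),
            (-(1 / r) * ∫ s in Ioi r, Real.exp (-lam * (s - r)) * f s * s) ^ 2
              * (1 + r ^ 2) ^ γ * r)
          ≤ C₁ * Real.sqrt (∫ r in Ioi (1:ℝ), (f r) ^ 2 * (1 + r ^ 2) ^ γ * r) := by
  classical
  set g : ℝ → ℝ := fun z => Real.exp (-lam*z) * ((1+z) * (2*(1+z^2)) ^ |γ|) with hg_def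
  have hg_meas : Measurable g := by
    apply ((measurable_id.const_mul (-lam)).exp).mul
    exact (measurable_const.add measurable_id).mul
      (((((measurable_id.pow_const 2).const_add 1)).const_mul 2).pow_const |γ|)
  set K : ℝ≥0∞ := ∫⁻ z in Ioi (0:ℝ), ENNReal.ofReal (g z) with hK_def
  have hK_fin : K ≠ ∞ := by
    have hint := g_integrable lam γ hlam
    have hnn : 0 ≤ᵐ[volume.restrict (Ioi (0:ℝ))] g := by
      refine (ae_restrict_iff' measurableSet_Ioi).2 (ae_of_all _ fun z hz => ?_)
      have hz0 : (0:ℝ) < z := hz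
      have : (0:ℝ) ≤ (1+z) * (2*(1+z^2)) ^ |γ| := by positivity
      have he : (0:ℝ) ≤ Real.exp (-lam*z) := (Real.exp_pos _).le
      exact mul_nonneg he this
    exact ((hasFiniteIntegral_iff_ofReal hnn).1 hint.2).ne
  set Ke : ℝ≥0∞ := ∫⁻ z in Ioi (0:ℝ), ENNReal.ofReal (Real.exp (-lam*z)) with hKe_def
  have hKe_fin : Ke ≠ ∞ := by
    have hint := exp_neg_integrableOn_Ioi 0 hlam
    have hnn : 0 ≤ᵐ[volume.restrict (Ioi (0:ℝ))] fun z => Real.exp (-lam*z) :=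
      ae_of_all _ fun z => (Real.exp_pos _).le
    exact ((hasFiniteIntegral_iff_ofReal hnn).1 hint.2).ne
  refine ⟨Real.sqrt ((K * Ke).toReal) + 1, by positivity, ?_⟩
  intro f hf hfint
  set v : ℝ → ℝ := fun r => ∫ s in Ioi r, Real.exp (-lam * (s - r)) * f s * s with hv_def
  -- measurability of v
  have hv_meas : Measurable v := by
    have hF : Measurable fun p : ℝ × ℝ =>
        if p.1 < p.2 then Real.exp (-lam * (p.2 - p.1)) * f p.2 * p.2 else 0 := by
      refine Measurable.ite (measurableSet_lt measurable_fst measurable_snd) ?_ measurable_const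
      exact (((measurable_snd.sub measurable_fst).const_mul (-lam)).exp.mul
        (hf.comp measurable_snd)).mul measurable_snd
    have hv2 : v = fun r => ∫ s,
        (if r < s then Real.exp (-lam * (s - r)) * f s * s else 0) := by
      funext r
      show (∫ s in Ioi r, Real.exp (-lam * (s - r)) * f s * s) = _
      rw [← integral_indicator measurableSet_Ioi]
      simp only [Set.indicator_apply, mem_Ioi]
    rw [hv2]
    exact (hF.stronglyMeasurable.integral_prod_right').measurable
  -- key pointwise bound
  have key : ∀ r ∈ Ioi (1:ℝ),
      ENNReal.ofReal ((-(1/r) * v r)^2 * (1+r^2)^γ * r)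
        ≤ K * ∫⁻ s in Ioi r,
            ENNReal.ofReal (Real.exp (-lam*(s-r))) * ENNReal.ofReal (f s^2 * (1+s^2)^γ * s) := by
    intro r hr
    have hr1 : (1:ℝ) < r := hr
    have hr0 : (0:ℝ) < r := lt_trans one_pos hr1
    set B1 : ℝ → ℝ≥0∞ := fun s =>
      ENNReal.ofReal (Real.exp (-lam*(s-r)) * (s * (1+s^2) ^ (-γ))) with hB1_def
    set B2 : ℝ → ℝ≥0∞ := fun s =>
      ENNReal.ofReal (Real.exp (-lam*(s-r)) * (f s^2 * (1+s^2)^γ * s)) with hB2_def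
    set A : ℝ → ℝ≥0∞ := fun s =>
      ENNReal.ofReal (Real.exp (-lam*(s-r)) * (|f s| * s)) with hA_def
    have hB1_meas : Measurable B1 := by
      apply Measurable.ennreal_ofReal
      exact ((measurable_id.sub_const r).const_mul (-lam)).exp.mul
        (measurable_id.mul (((measurable_id.pow_const 2).const_add 1).pow_const (-γ)))
    have hB2_meas : Measurable B2 := by
      apply Measurable.ennreal_ofReal
      exact ((measurable_id.sub_const r).const_mul (-lam)).exp.mul
        (((hf.pow_const 2).mul
          (((measurable_id.pow_const 2).const_add 1).pow_const γ)).mul measurable_id)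
    set L : ℝ≥0∞ := ∫⁻ s in Ioi r, A s with hL_def
    -- Cauchy-Schwarz
    have hCS : L * L ≤ (∫⁻ s in Ioi r, B1 s) * (∫⁻ s in Ioi r, B2 s) := by
      have hconj : Real.HolderConjugate 2 2 := Real.HolderConjugate.two_two
      have h := ENNReal.lintegral_mul_le_Lp_mul_Lq (volume.restrict (Ioi r)) hconj
        (f := fun s => B1 s ^ (1/2 : ℝ)) (g := fun s => B2 s ^ (1/2 : ℝ))
        (hB1_meas.pow_const _).aemeasurable (hB2_meas.pow_const _).aemeasurable
      have hpow1 : ∀ s : ℝ, (B1 s ^ (1/2:ℝ)) ^ (2:ℝ) = B1 s := by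
        intro s; rw [← ENNReal.rpow_mul]; norm_num
      have hpow2 : ∀ s : ℝ, (B2 s ^ (1/2:ℝ)) ^ (2:ℝ) = B2 s := by
        intro s; rw [← ENNReal.rpow_mul]; norm_num
      simp only [Pi.mul_apply, hpow1, hpow2] at h
      have hAeq : L = ∫⁻ s in Ioi r, B1 s ^ (1/2:ℝ) * B2 s ^ (1/2:ℝ) := by
        rw [hL_def]
        apply setLIntegral_congr_fun measurableSet_Ioi
        intro s hs
        have hs0 : (0:ℝ) < s := lt_trans hr0 hs
        have he : (0:ℝ) ≤ Real.exp (-lam*(s-r)) := (Real.exp_pos _).le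
        have h1nn : (0:ℝ) ≤ Real.exp (-lam*(s-r)) * (s * (1+s^2) ^ (-γ)) := by positivity
        have h2nn : (0:ℝ) ≤ Real.exp (-lam*(s-r)) * (f s^2 * (1+s^2)^γ * s) := by positivity
        rw [hB1_def, hB2_def, hA_def]
        beta_reduce
        rw [ENNReal.ofReal_rpow_of_nonneg h1nn (by norm_num : (0:ℝ) ≤ 1/2),
            ENNReal.ofReal_rpow_of_nonneg h2nn (by norm_num : (0:ℝ) ≤ 1/2),
            ← ENNReal.ofReal_mul (by positivity)]
        congr 1
        have hone : (1+s^2) ^ (-γ) * (1+s^2)^γ = 1 := by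
          rw [← Real.rpow_add (by positivity : (0:ℝ) < 1+s^2)]
          norm_num
        have hprod : (Real.exp (-lam*(s-r)) * (s * (1+s^2) ^ (-γ)))
            * (Real.exp (-lam*(s-r)) * (f s^2 * (1+s^2)^γ * s))
            = (Real.exp (-lam*(s-r)) * (|f s| * s))^2 := by
          have habs : |f s|^2 = f s^2 := sq_abs (f s)
          calc (Real.exp (-lam*(s-r)) * (s * (1+s^2) ^ (-γ)))
              * (Real.exp (-lam*(s-r)) * (f s^2 * (1+s^2)^γ * s))
              = (Real.exp (-lam*(s-r)))^2 * (f s^2 * s^2)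
                  * ((1+s^2) ^ (-γ) * (1+s^2)^γ) := by ring
            _ = (Real.exp (-lam*(s-r)))^2 * (f s^2 * s^2) := by rw [hone, mul_one]
            _ = (Real.exp (-lam*(s-r)) * (|f s| * s))^2 := by
                rw [mul_pow, mul_pow, habs]
        rw [← Real.mul_rpow h1nn h2nn, hprod,
            ← Real.rpow_natCast (Real.exp (-lam*(s-r)) * (|f s| * s)) 2,
            ← Real.rpow_mul (by positivity)]
        norm_num
      have hL_le : L ≤ (∫⁻ s in Ioi r, B1 s) ^ (1/2:ℝ) * (∫⁻ s in Ioi r, B2 s) ^ (1/2:ℝ) := by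
        rw [hAeq]
        simpa using h
      calc L * L ≤ ((∫⁻ s in Ioi r, B1 s) ^ (1/2:ℝ) * (∫⁻ s in Ioi r, B2 s) ^ (1/2:ℝ))
          * ((∫⁻ s in Ioi r, B1 s) ^ (1/2:ℝ) * (∫⁻ s in Ioi r, B2 s) ^ (1/2:ℝ)) :=
            mul_le_mul' hL_le hL_le
        _ = (((∫⁻ s in Ioi r, B1 s) ^ (1/2:ℝ)) ^ (2:ℝ))
            * (((∫⁻ s in Ioi r, B2 s) ^ (1/2:ℝ)) ^ (2:ℝ)) := by
            rw [show (2:ℝ) = ((2:ℕ):ℝ) by norm_num, ENNReal.rpow_natCast,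
              ENNReal.rpow_natCast]
            ring
        _ = (∫⁻ s in Ioi r, B1 s) * (∫⁻ s in Ioi r, B2 s) := by
            rw [← ENNReal.rpow_mul, ← ENNReal.rpow_mul]
            norm_num
    -- kernel bound
    have hB1int : ∫⁻ s in Ioi r, B1 s ≤ ENNReal.ofReal (r * (1+r^2) ^ (-γ)) * K := by
      have hrW : (0:ℝ) ≤ r * (1+r^2) ^ (-γ) := by positivity
      calc ∫⁻ s in Ioi r, B1 s
          ≤ ∫⁻ s in Ioi r, ENNReal.ofReal (r * (1+r^2) ^ (-γ)) * ENNReal.ofReal (g (s-r)) := by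
            refine lintegral_mono_ae ((ae_restrict_iff' measurableSet_Ioi).2
              (ae_of_all _ fun s hs => ?_))
            have hsr : (0:ℝ) ≤ s - r := by
              have : r < s := hs
              linarith
            have hrat := ratio_bound γ hr1.le hsr
            have hrz : r + (s - r) = s := by ring
            rw [hrz] at hrat
            have he : (0:ℝ) ≤ Real.exp (-lam*(s-r)) := (Real.exp_pos _).le
            rw [hB1_def, ← ENNReal.ofReal_mul hrW]
            apply ENNReal.ofReal_le_ofReal
            calc Real.exp (-lam*(s-r)) * (s * (1+s^2) ^ (-γ))
                ≤ Real.exp (-lam*(s-r)) * ((r * (1+r^2) ^ (-γ))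
                    * ((1+(s-r)) * (2*(1+(s-r)^2)) ^ |γ|)) :=
                  mul_le_mul_of_nonneg_left hrat he
              _ = r * (1+r^2) ^ (-γ) * g (s-r) := by rw [hg_def]; ring
        _ = ENNReal.ofReal (r * (1+r^2) ^ (-γ)) * ∫⁻ s in Ioi r, ENNReal.ofReal (g (s-r)) :=
            lintegral_const_mul' _ _ ENNReal.ofReal_ne_top
        _ = ENNReal.ofReal (r * (1+r^2) ^ (-γ)) * K := by
            rw [translate_Ioi r (fun z => ENNReal.ofReal (g z)) hg_meas.ennreal_ofReal]
    -- bound on u in terms of L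
    have hA_bd : ENNReal.ofReal ((-(1/r) * v r)^2 * (1+r^2)^γ * r)
        ≤ ENNReal.ofReal ((1+r^2)^γ / r) * (L * L) := by
      by_cases hL : L = ∞
      · rw [hL, ENNReal.top_mul_top, ENNReal.mul_top (by
          simp only [ne_eq, ENNReal.ofReal_eq_zero, not_le]
          positivity)]
        exact le_top
      · have hnorm : |v r| ≤ L.toReal := by
          have h1 := norm_integral_le_lintegral_norm (μ := volume.restrict (Ioi r))
            (fun s => Real.exp (-lam*(s-r)) * f s * s)
          have h2 : ∫⁻ s in Ioi r, ENNReal.ofReal ‖Real.exp (-lam*(s-r)) * f s * s‖ = L := by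
            rw [hL_def]
            apply setLIntegral_congr_fun measurableSet_Ioi
            intro s hs
            have hs0 : (0:ℝ) < s := lt_trans hr0 hs
            have he : (0:ℝ) ≤ Real.exp (-lam*(s-r)) := (Real.exp_pos _).le
            rw [hA_def]
            beta_reduce
            congr 1
            rw [Real.norm_eq_abs, abs_mul, abs_mul, abs_of_nonneg he, abs_of_nonneg hs0.le]
            ring
          rw [h2] at h1
          calc |v r| = ‖v r‖ := (Real.norm_eq_abs _).symm
            _ ≤ L.toReal := h1
        have hT0 : (0:ℝ) ≤ L.toReal := ENNReal.toReal_nonneg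
        have hsq : (-(1/r) * v r)^2 * (1+r^2)^γ * r
            ≤ ((1+r^2)^γ / r) * (L.toReal * L.toReal) := by
          have h1 : v r ^ 2 ≤ L.toReal * L.toReal := by
            have := abs_le.1 hnorm
            nlinarith [this.1, this.2]
          have h2 : (-(1/r) * v r)^2 * (1+r^2)^γ * r = v r^2 * ((1+r^2)^γ / r) := by
            field_simp
          rw [h2]
          have hWpos : (0:ℝ) ≤ (1+r^2)^γ / r := by positivity
          calc v r^2 * ((1+r^2)^γ / r) ≤ (L.toReal * L.toReal) * ((1+r^2)^γ / r) :=
                mul_le_mul_of_nonneg_right h1 hWpos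
            _ = ((1+r^2)^γ / r) * (L.toReal * L.toReal) := by ring
        calc ENNReal.ofReal ((-(1/r) * v r)^2 * (1+r^2)^γ * r)
            ≤ ENNReal.ofReal (((1+r^2)^γ / r) * (L.toReal * L.toReal)) :=
              ENNReal.ofReal_le_ofReal hsq
          _ = ENNReal.ofReal ((1+r^2)^γ / r) * (L * L) := by
              rw [ENNReal.ofReal_mul (by positivity), ENNReal.ofReal_mul hT0,
                ENNReal.ofReal_toReal hL]
    -- combine
    have hsplit : ∫⁻ s in Ioi r, B2 s
        = ∫⁻ s in Ioi r,
            ENNReal.ofReal (Real.exp (-lam*(s-r))) * ENNReal.ofReal (f s^2 * (1+s^2)^γ * s) := by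
      apply setLIntegral_congr_fun measurableSet_Ioi
      intro s hs
      show ENNReal.ofReal (Real.exp (-lam*(s-r)) * (f s^2 * (1+s^2)^γ * s)) = _
      rw [ENNReal.ofReal_mul (Real.exp_pos _).le]
    have hcancel : ENNReal.ofReal ((1+r^2)^γ / r) * ENNReal.ofReal (r * (1+r^2) ^ (-γ)) = 1 := by
      rw [← ENNReal.ofReal_mul (by positivity)]
      have : (1+r^2)^γ / r * (r * (1+r^2) ^ (-γ)) = 1 := by
        have hx : (0:ℝ) < 1+r^2 := by positivity
        have hone : (1+r^2)^γ * (1+r^2) ^ (-γ) = 1 := by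
          rw [← Real.rpow_add hx]; norm_num
        have h2 : (1+r^2)^γ / r * (r * (1+r^2) ^ (-γ))
            = ((1+r^2)^γ * (1+r^2) ^ (-γ)) * (r / r) := by ring
        rw [h2, div_self hr0.ne', hone, mul_one]
      rw [this, ENNReal.ofReal_one]
    calc ENNReal.ofReal ((-(1/r) * v r)^2 * (1+r^2)^γ * r)
        ≤ ENNReal.ofReal ((1+r^2)^γ / r) * (L * L) := hA_bd
      _ ≤ ENNReal.ofReal ((1+r^2)^γ / r)
          * ((ENNReal.ofReal (r * (1+r^2) ^ (-γ)) * K) * (∫⁻ s in Ioi r, B2 s)) := by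
          apply mul_le_mul_right
          exact hCS.trans (mul_le_mul_left hB1int _)
      _ = (ENNReal.ofReal ((1+r^2)^γ / r) * ENNReal.ofReal (r * (1+r^2) ^ (-γ)))
          * (K * (∫⁻ s in Ioi r, B2 s)) := by ring
      _ = K * (∫⁻ s in Ioi r, B2 s) := by rw [hcancel, one_mul]
      _ = K * ∫⁻ s in Ioi r,
            ENNReal.ofReal (Real.exp (-lam*(s-r))) * ENNReal.ofReal (f s^2 * (1+s^2)^γ * s) := by
          rw [hsplit]
  -- global part
  set P : ℝ → ℝ → ℝ≥0∞ := fun r s => if r < s then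
      ENNReal.ofReal (Real.exp (-lam*(s-r))) * ENNReal.ofReal (f s^2 * (1+s^2)^γ * s)
    else 0 with hP_def
  have hstep1 : ∀ r ∈ Ioi (1:ℝ),
      (∫⁻ s in Ioi r,
        ENNReal.ofReal (Real.exp (-lam*(s-r))) * ENNReal.ofReal (f s^2 * (1+s^2)^γ * s))
      = ∫⁻ s in Ioi 1, P r s := by
    intro r hr
    have hind : ∀ s, P r s = (Ioi r).indicator
        (fun s => ENNReal.ofReal (Real.exp (-lam*(s-r)))
          * ENNReal.ofReal (f s^2 * (1+s^2)^γ * s)) s := by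
      intro s
      rw [Set.indicator_apply]
      simp only [hP_def, mem_Ioi]
    symm
    calc ∫⁻ s in Ioi 1, P r s
        = ∫⁻ s in Ioi 1, (Ioi r).indicator
            (fun s => ENNReal.ofReal (Real.exp (-lam*(s-r)))
              * ENNReal.ofReal (f s^2 * (1+s^2)^γ * s)) s := by
          simp only [hind]
      _ = ∫⁻ s in Ioi r ∩ Ioi 1,
            ENNReal.ofReal (Real.exp (-lam*(s-r))) * ENNReal.ofReal (f s^2 * (1+s^2)^γ * s) := by
          rw [lintegral_indicator measurableSet_Ioi, Measure.restrict_restrict measurableSet_Ioi]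
      _ = ∫⁻ s in Ioi r,
            ENNReal.ofReal (Real.exp (-lam*(s-r))) * ENNReal.ofReal (f s^2 * (1+s^2)^γ * s) := by
          rw [Ioi_inter_Ioi, max_eq_left (le_of_lt hr)]
  have hPmeas : Measurable (Function.uncurry P) := by
    have : Function.uncurry P = fun p : ℝ × ℝ => if p.1 < p.2 then
        ENNReal.ofReal (Real.exp (-lam*(p.2-p.1)))
          * ENNReal.ofReal (f p.2^2 * (1+p.2^2)^γ * p.2) else 0 := rfl
    rw [this]
    refine Measurable.ite (measurableSet_lt measurable_fst measurable_snd) ?_ measurable_const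
    refine Measurable.mul (f := fun p : ℝ × ℝ => ENNReal.ofReal (Real.exp (-lam*(p.2-p.1))))
      (g := fun p : ℝ × ℝ => ENNReal.ofReal (f p.2^2 * (1+p.2^2)^γ * p.2)) ?_ ?_
    · exact (((measurable_snd.sub measurable_fst).const_mul (-lam)).exp).ennreal_ofReal
    · exact ((((hf.comp measurable_snd).pow_const 2).mul
        (((measurable_snd.pow_const 2).const_add 1).pow_const γ)).mul
          measurable_snd).ennreal_ofReal
  have hswap : ∫⁻ r in Ioi (1:ℝ), ∫⁻ s in Ioi (1:ℝ), P r s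
      = ∫⁻ s in Ioi (1:ℝ), ∫⁻ r in Ioi (1:ℝ), P r s :=
    lintegral_lintegral_swap hPmeas.aemeasurable
  have hinner : ∀ s ∈ Ioi (1:ℝ),
      (∫⁻ r in Ioi (1:ℝ), P r s) ≤ Ke * ENNReal.ofReal (f s^2 * (1+s^2)^γ * s) := by
    intro s hs
    have hP2 : ∀ r, P r s = (if r < s then ENNReal.ofReal (Real.exp (-lam*(s-r))) else 0)
        * ENNReal.ofReal (f s^2 * (1+s^2)^γ * s) := by
      intro r
      by_cases h : r < s <;> simp [hP_def, h]
    have hbound : (∫⁻ r in Ioi (1:ℝ),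
        if r < s then ENNReal.ofReal (Real.exp (-lam*(s-r))) else 0) ≤ Ke := by
      have hind : ∀ r : ℝ, (if r < s then ENNReal.ofReal (Real.exp (-lam*(s-r))) else 0)
          = (Iio s).indicator (fun r => ENNReal.ofReal (Real.exp (-lam*(s-r)))) r := by
        intro r
        rw [Set.indicator_apply]
        simp only [mem_Iio]
      calc (∫⁻ r in Ioi (1:ℝ), if r < s then ENNReal.ofReal (Real.exp (-lam*(s-r))) else 0)
          = ∫⁻ r in Iio s ∩ Ioi 1, ENNReal.ofReal (Real.exp (-lam*(s-r))) := by
            simp only [hind]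
            rw [lintegral_indicator measurableSet_Iio,
              Measure.restrict_restrict measurableSet_Iio]
        _ ≤ ∫⁻ r in Iio s, ENNReal.ofReal (Real.exp (-lam*(s-r))) :=
            lintegral_mono_set inter_subset_left
        _ = Ke := by
            rw [reflect_Iio s (fun z => ENNReal.ofReal (Real.exp (-lam*z)))
              ((measurable_id.const_mul (-lam)).exp.ennreal_ofReal)]
    calc ∫⁻ r in Ioi (1:ℝ), P r s
        = (∫⁻ r in Ioi (1:ℝ), if r < s then ENNReal.ofReal (Real.exp (-lam*(s-r))) else 0)
            * ENNReal.ofReal (f s^2 * (1+s^2)^γ * s) := by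
          simp only [hP2]
          rw [lintegral_mul_const' _ _ ENNReal.ofReal_ne_top]
      _ ≤ Ke * ENNReal.ofReal (f s^2 * (1+s^2)^γ * s) := mul_le_mul_left hbound _
  have hfin_nonneg : 0 ≤ᵐ[volume.restrict (Ioi (1:ℝ))] fun s => f s^2 * (1+s^2)^γ * s := by
    refine (ae_restrict_iff' measurableSet_Ioi).2 (ae_of_all _ fun s hs => ?_)
    have hs0 : (0:ℝ) < s := lt_trans one_pos hs
    positivity
  have hIf : (∫⁻ s in Ioi (1:ℝ), ENNReal.ofReal (f s^2 * (1+s^2)^γ * s))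
      = ENNReal.ofReal (∫ s in Ioi (1:ℝ), f s^2 * (1+s^2)^γ * s) :=
    (ofReal_integral_eq_lintegral_ofReal hfint hfin_nonneg).symm
  have hT : ∫⁻ r in Ioi (1:ℝ), ENNReal.ofReal ((-(1/r) * v r)^2 * (1+r^2)^γ * r)
      ≤ K * Ke * ENNReal.ofReal (∫ s in Ioi (1:ℝ), f s^2 * (1+s^2)^γ * s) := by
    calc ∫⁻ r in Ioi (1:ℝ), ENNReal.ofReal ((-(1/r) * v r)^2 * (1+r^2)^γ * r)
        ≤ ∫⁻ r in Ioi (1:ℝ), K * ∫⁻ s in Ioi (1:ℝ), P r s := by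
          refine lintegral_mono_ae ((ae_restrict_iff' measurableSet_Ioi).2
            (ae_of_all _ fun r hr => ?_))
          rw [← hstep1 r hr]
          exact key r hr
      _ = K * ∫⁻ r in Ioi (1:ℝ), ∫⁻ s in Ioi (1:ℝ), P r s :=
          lintegral_const_mul' K _ hK_fin
      _ = K * ∫⁻ s in Ioi (1:ℝ), ∫⁻ r in Ioi (1:ℝ), P r s := by rw [hswap]
      _ ≤ K * ∫⁻ s in Ioi (1:ℝ), Ke * ENNReal.ofReal (f s^2 * (1+s^2)^γ * s) :=
          mul_le_mul_right (lintegral_mono_ae ((ae_restrict_iff' measurableSet_Ioi).2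
            (ae_of_all _ hinner))) K
      _ = K * (Ke * ∫⁻ s in Ioi (1:ℝ), ENNReal.ofReal (f s^2 * (1+s^2)^γ * s)) := by
          rw [lintegral_const_mul' Ke _ hKe_fin]
      _ = K * Ke * ENNReal.ofReal (∫ s in Ioi (1:ℝ), f s^2 * (1+s^2)^γ * s) := by
          rw [hIf, mul_assoc]
  have hInt_nonneg : 0 ≤ᵐ[volume.restrict (Ioi (1:ℝ))]
      fun r => (-(1/r) * v r)^2 * (1+r^2)^γ * r := by
    refine (ae_restrict_iff' measurableSet_Ioi).2 (ae_of_all _ fun r hr => ?_)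
    have hr0 : (0:ℝ) < r := lt_trans one_pos hr
    have h1 : (0:ℝ) ≤ (-(1/r) * v r)^2 := sq_nonneg _
    have h2 : (0:ℝ) ≤ (1+r^2)^γ := Real.rpow_nonneg (by positivity) _
    exact mul_nonneg (mul_nonneg h1 h2) hr0.le
  have hmeasI : AEStronglyMeasurable (fun r => (-(1/r) * v r)^2 * (1+r^2)^γ * r)
      (volume.restrict (Ioi (1:ℝ))) := by
    apply Measurable.aestronglyMeasurable
    exact ((((measurable_const.div measurable_id).neg.mul hv_meas).pow_const 2).mul
      (((measurable_id.pow_const 2).const_add 1).pow_const γ)).mul measurable_id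
  have hIu : ∫ r in Ioi (1:ℝ), (-(1/r) * v r)^2 * (1+r^2)^γ * r
      = (∫⁻ r in Ioi (1:ℝ), ENNReal.ofReal ((-(1/r) * v r)^2 * (1+r^2)^γ * r)).toReal :=
    integral_eq_lintegral_of_nonneg_ae hInt_nonneg hmeasI
  have hIf_nonneg : (0:ℝ) ≤ ∫ s in Ioi (1:ℝ), f s^2 * (1+s^2)^γ * s := by
    refine setIntegral_nonneg measurableSet_Ioi fun s hs => ?_
    have hs0 : (0:ℝ) < s := lt_trans one_pos hs
    positivity
  have hRfin : K * Ke * ENNReal.ofReal (∫ s in Ioi (1:ℝ), f s^2 * (1+s^2)^γ * s) ≠ ∞ :=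
    ENNReal.mul_ne_top (ENNReal.mul_ne_top hK_fin hKe_fin) ENNReal.ofReal_ne_top
  rw [hIu]
  calc (Real.sqrt
      ((∫⁻ r in Ioi (1:ℝ), ENNReal.ofReal ((-(1/r) * v r)^2 * (1+r^2)^γ * r)).toReal))
      ≤ Real.sqrt
          ((K * Ke * ENNReal.ofReal (∫ s in Ioi (1:ℝ), f s^2 * (1+s^2)^γ * s)).toReal) :=
        Real.sqrt_le_sqrt (ENNReal.toReal_mono hRfin hT)
    _ = Real.sqrt ((K * Ke).toReal * ∫ s in Ioi (1:ℝ), f s^2 * (1+s^2)^γ * s) := by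
        rw [ENNReal.toReal_mul, ENNReal.toReal_ofReal hIf_nonneg]
    _ = Real.sqrt ((K * Ke).toReal)
        * Real.sqrt (∫ s in Ioi (1:ℝ), f s^2 * (1+s^2)^γ * s) :=
        Real.sqrt_mul ENNReal.toReal_nonneg _
    _ ≤ (Real.sqrt ((K * Ke).toReal) + 1)
        * Real.sqrt (∫ s in Ioi (1:ℝ), f s^2 * (1+s^2)^γ * s) := by
        apply mul_le_mul_of_nonneg_right _ (Real.sqrt_nonneg _)
        linarith
end

section
/- Let β < 0, κ > 0, and let φ₀ ∈ C¹([0,∞)) satisfy φ₀(0) = c₀ ∈ ℝ and φ₀'(r) → κ as r → ∞. Then ∫₀^∞ (d/dS)(1/S) · e^{2βφ₀(S)} S dS + ∫₀^∞ (1/S)(1/S + 2βφ₀'(S)) e^{2βφ₀(S)} S dS = -e^{2βφ₀(0)} ≠ 0; equivalently, the pairing ⟨L_φ(1/S), e^{2βφ₀}⟩ of the image of 1/S under L_φ u = u' + u/S + 2βφ₀'u with the adjoint-kernel element e^{2βφ₀} equals -e^{2βφ₀(0)} and is nonzero. -/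
open MeasureTheory Set Filter

/-- for `β < 0`, `κ > 0`, and `φ₀ ∈ C¹([0,∞))` with `φ₀(0) = c₀` and
`φ₀' → κ` at infinity, the pairing `⟨L_φ(1/S), e^{2βφ₀}⟩ = ∫₀^∞ [(1/S)' + (1/S)(1/S + 2βφ₀')]
e^{2βφ₀} S dS` equals `-e^{2βφ₀(0)}`, and in particular is nonzero. -/
theorem stmt17 (β κ c₀ : ℝ) (hβ : β < 0) (hκ : 0 < κ)
    (φ₀ φ₀' : ℝ → ℝ)
    (hderiv : ∀ S ∈ Ioi (0:ℝ), HasDerivAt φ₀ (φ₀' S) S)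
    (hφcont : ContinuousOn φ₀ (Ici 0))
    (hφ'cont : ContinuousOn φ₀' (Ici 0))
    (hlim : Tendsto φ₀' atTop (nhds κ))
    (h0 : φ₀ 0 = c₀) :
    (∫ S in Ioi (0:ℝ),
        ((-(1 / S ^ 2)) + (1 / S) * (1 / S + 2 * β * φ₀' S)) * Real.exp (2 * β * φ₀ S) * S)
      = -Real.exp (2 * β * φ₀ 0) ∧
    -Real.exp (2 * β * φ₀ 0) ≠ 0 := by
  set g : ℝ → ℝ := fun S => Real.exp (2 * β * φ₀ S) with hg_def
  set g' : ℝ → ℝ := fun S => 2 * β * φ₀' S * Real.exp (2 * β * φ₀ S) with hg'_def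
  have hgderiv : ∀ S ∈ Ioi (0:ℝ), HasDerivAt g (g' S) S := by
    intro S hS
    have := (((hderiv S hS).const_mul (2 * β)).exp)
    convert this using 1
    simp [g', mul_comm]
  -- choose b > 0 past which φ₀' ≥ κ/2
  have hev : ∀ᶠ x in atTop, κ / 2 ≤ φ₀' x :=
    hlim.eventually (eventually_ge_nhds (by linarith))
  obtain ⟨a, ha⟩ := eventually_atTop.1 hev
  set b : ℝ := max a 1 with hb_def
  have hb0 : (0:ℝ) < b := lt_of_lt_of_le one_pos (le_max_right a 1)
  have hb' : ∀ x, b ≤ x → κ / 2 ≤ φ₀' x := fun x hx => ha x ((le_max_left a 1).trans hx)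
  -- φ₀ → ∞
  have hφtop : Tendsto φ₀ atTop atTop := by
    apply tendsto_atTop_mono' atTop (show ∀ᶠ S in atTop, φ₀ b + κ / 2 * (S - b) ≤ φ₀ S by
      filter_upwards [eventually_gt_atTop b] with S hS
      have hcont : ContinuousOn φ₀ (Icc b S) := by
        apply hφcont.mono
        intro x hx; exact le_trans hb0.le hx.1
      have hd : ∀ x ∈ Ioo b S, HasDerivAt φ₀ (φ₀' x) x := fun x hx =>
        hderiv x (lt_trans hb0 hx.1)
      obtain ⟨c, hc, hceq⟩ := exists_hasDerivAt_eq_slope φ₀ φ₀' hS hcont hd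
      have hslope : κ / 2 ≤ (φ₀ S - φ₀ b) / (S - b) := hceq ▸ hb' c hc.1.le
      have hSb : (0:ℝ) < S - b := by linarith
      have := (le_div_iff₀ hSb).1 hslope
      linarith)
    have : Tendsto (fun S => φ₀ b + κ / 2 * (S - b)) atTop atTop := by
      apply tendsto_atTop_add_const_left
      apply Tendsto.const_mul_atTop (by linarith : (0:ℝ) < κ / 2)
      exact tendsto_atTop_add_const_right _ _ tendsto_id
    exact this
  -- g → 0
  have hgtend : Tendsto g atTop (nhds 0) := by
    apply Real.tendsto_exp_atBot.comp
    exact Tendsto.const_mul_atTop_of_neg (by linarith : 2 * β < 0) hφtop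
  -- continuity of g' on Ici 0
  have hg'cont : ContinuousOn g' (Ici 0) :=
    ((continuousOn_const.mul hφ'cont).mul ((hφcont.const_smul (2*β)).rexp))
  -- integrability of g' on Ioi 0
  have hint1 : IntegrableOn g' (Ioc 0 b) :=
    (hg'cont.mono (Icc_subset_Ici_self (a := b) (b := (0:ℝ)))).integrableOn_compact
      isCompact_Icc |>.mono_set Ioc_subset_Icc_self
  have hint2 : IntegrableOn g' (Ioi b) := by
    apply integrableOn_Ioi_deriv_of_nonpos
      ((hgderiv b hb0).continuousAt.continuousWithinAt)
      (fun x hx => hgderiv x (lt_trans hb0 hx)) ?_ hgtend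
    · intro x hx
      have h1 : 0 < φ₀' x := lt_of_lt_of_le (by linarith) (hb' x (le_of_lt hx))
      have h2 : 0 < Real.exp (2 * β * φ₀ x) := Real.exp_pos _
      have : 2 * β * φ₀' x ≤ 0 := by nlinarith
      exact mul_nonpos_of_nonpos_of_nonneg this h2.le
  have hint : IntegrableOn g' (Ioi 0) := by
    have : Ioi (0:ℝ) = Ioc 0 b ∪ Ioi b := (Ioc_union_Ioi_eq_Ioi hb0.le).symm
    rw [this]
    exact hint1.union hint2
  -- continuity of g at 0 from the right
  have hgcont0 : ContinuousWithinAt g (Ici 0) 0 := by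
    have : ContinuousOn g (Ici 0) := (hφcont.const_smul (2*β)).rexp
    exact this.continuousWithinAt self_mem_Ici
  have key : ∫ S in Ioi (0:ℝ), g' S = 0 - g 0 :=
    integral_Ioi_of_hasDerivAt_of_tendsto hgcont0 hgderiv hint hgtend
  constructor
  · have congr1 : (∫ S in Ioi (0:ℝ),
        ((-(1 / S ^ 2)) + (1 / S) * (1 / S + 2 * β * φ₀' S)) * Real.exp (2 * β * φ₀ S) * S)
        = ∫ S in Ioi (0:ℝ), g' S := by
      apply setIntegral_congr_fun measurableSet_Ioi
      intro S hS
      have hS0 : S ≠ 0 := ne_of_gt hS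
      simp only [g']
      field_simp
      ring
    rw [congr1, key]
    simp [g]
  · simp [Real.exp_ne_zero]
end
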